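/- Let S be an n-simplex and B^1,...,B^{n+1} closed convex subsets of S whose union contains the boundary of S. If x ∈ ∩_i B^i, then ∪_i B^i = S. -/

import Mathlib

theorem stmt_16 (n : ℕ) (a : Fin (n + 1) → EuclideanSpace ℝ (Fin n))
    (ha : AffineIndependent ℝ a)
    (S : Set (EuclideanSpace ℝ (Fin n))) (hS : S = convexHull ℝ (Set.range a))
    (face : Fin (n + 1) → Set (EuclideanSpace ℝ (Fin n)))
    (hface : ∀ i, face i = convexHull ℝ (a '' {j | j ≠ i}))
    (B : Fin (n + 1) → Set (EuclideanSpace ℝ (Fin n)))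
    (hBclosed : ∀ i, IsClosed (B i)) (hBconv : ∀ i, Convex ℝ (B i))
    (hBS : ∀ i, B i ⊆ S)
    (hbd : (⋃ i, face i) ⊆ ⋃ i, B i)
    (x : EuclideanSpace ℝ (Fin n)) (hx : x ∈ ⋂ i, B i) :
    (⋃ i, B i) = S := by
  have hspan : affineSpan ℝ (Set.range a) = ⊤ := by
    rw [ha.affineSpan_eq_top_iff_card_eq_finrank_add_one]
    simp [finrank_euclideanSpace_fin]
  let b : AffineBasis (Fin (n + 1)) ℝ (EuclideanSpace ℝ (Fin n)) := ⟨a, ha, hspan⟩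
  have hb : ⇑b = a := rfl
  have hmem : ∀ v, v ∈ S ↔ ∀ i, 0 ≤ b.coord i v := by
    intro v
    rw [hS, ← hb, b.convexHull_eq_nonneg_coord]
    rfl
  have hx0 : x ∈ B 0 := Set.mem_iInter.mp hx 0
  have hxS : ∀ i, 0 ≤ b.coord i x := (hmem x).mp (hBS 0 hx0)
  refine Set.Subset.antisymm (Set.iUnion_subset hBS) ?_
  intro v hvS
  have hvc : ∀ i, 0 ≤ b.coord i v := (hmem v).mp hvS
  by_cases hvx : v = x
  · exact Set.mem_iUnion.mpr ⟨0, hvx ▸ hx0⟩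
  -- there is an index where coord of v is smaller than coord of x
  set c : Fin (n + 1) → ℝ := fun i => b.coord i v with hc
  set d : Fin (n + 1) → ℝ := fun i => b.coord i x with hd
  have hsumc : ∑ i, c i = 1 := b.sum_coord_apply_eq_one v
  have hsumd : ∑ i, d i = 1 := b.sum_coord_apply_eq_one x
  set I : Finset (Fin (n + 1)) := Finset.univ.filter (fun i => c i < d i) with hI
  have hInonempty : I.Nonempty := by
    by_contra hne
    apply hvx
    apply b.ext_elem
    intro i
    have hle : ∀ i ∈ Finset.univ, d i ≤ c i := by
      intro i _
      by_contra hlt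
      exact hne ⟨i, Finset.mem_filter.mpr ⟨Finset.mem_univ i, not_le.mp hlt⟩⟩
    have := (Finset.sum_eq_sum_iff_of_le hle).mp (by rw [hsumc, hsumd])
    exact (this i (Finset.mem_univ i)).symm
  obtain ⟨j, hjI, hjmin⟩ := I.exists_min_image (fun i => d i / (d i - c i)) hInonempty
  have hjlt : c j < d j := (Finset.mem_filter.mp hjI).2
  have hjpos : 0 < d j - c j := sub_pos.mpr hjlt
  set t : ℝ := d j / (d j - c j) with ht
  have ht1 : 1 ≤ t := by
    rw [ht, le_div_iff₀ hjpos]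
    linarith [hvc j]
  have htpos : 0 < t := lt_of_lt_of_le one_pos ht1
  set y : EuclideanSpace ℝ (Fin n) := AffineMap.lineMap x v t with hy
  have hcoordy : ∀ i, b.coord i y = d i + t * (c i - d i) := by
    intro i
    rw [hy, (b.coord i).apply_lineMap x v t, AffineMap.lineMap_apply_module]
    simp only [smul_eq_mul, hc, hd]
    ring
  have hynn : ∀ i, 0 ≤ b.coord i y := by
    intro i
    rw [hcoordy i]
    by_cases hi : c i < d i
    · have hiI : i ∈ I := Finset.mem_filter.mpr ⟨Finset.mem_univ i, hi⟩
      have := hjmin i hiI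
      have hipos : 0 < d i - c i := sub_pos.mpr hi
      rw [ht] at this ⊢
      rw [div_le_div_iff₀ hjpos hipos] at this
      have h2 : d j / (d j - c j) * (d i - c i) ≤ d i := by
        rw [div_mul_eq_mul_div, div_le_iff₀ hjpos]
        linarith
      nlinarith [hjpos]
    · push_neg at hi
      nlinarith [hxS i, htpos]
  have hcyj : b.coord j y = 0 := by
    have := hjpos
    rw [hcoordy j, ht]
    field_simp
    ring
  have hyS : y ∈ S := (hmem y).mpr hynn
  have hyface : y ∈ face j := by
    rw [hface j]
    have hsum1 : ∑ i ∈ Finset.univ.erase j, b.coord i y = 1 := by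
      rw [Finset.sum_erase (f := fun i => b.coord i y) Finset.univ hcyj, b.sum_coord_apply_eq_one]
    have hcm := Finset.centerMass_mem_convexHull (t := Finset.univ.erase j)
      (w := fun i => b.coord i y) (z := a) (R := ℝ) (s := a '' {k | k ≠ j})
      (fun i _ => hynn i) (by rw [hsum1]; norm_num)
      (fun i hi => ⟨i, (Finset.mem_erase.mp hi).1, rfl⟩)
    rwa [Finset.centerMass_eq_of_sum_1 _ _ hsum1,
      Finset.sum_erase (f := fun i => b.coord i y • a i) Finset.univ (by show b.coord j y • a j = 0; rw [hcyj, zero_smul]),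
      show ∑ i, b.coord i y • a i = y from b.linear_combination_coord_eq_self y] at hcm
  obtain ⟨k, hk⟩ := Set.mem_iUnion.mp (hbd (Set.mem_iUnion.mpr ⟨j, hyface⟩))
  have hxk : x ∈ B k := Set.mem_iInter.mp hx k
  have htne : t ≠ 0 := ne_of_gt htpos
  have hvcomb : (1 - t⁻¹) • x + t⁻¹ • y = v := by
    rw [hy, AffineMap.lineMap_apply_module, smul_add, smul_smul, smul_smul,
      inv_mul_cancel₀ htne, one_smul, ← add_assoc, ← add_smul]
    have h0 : 1 - t⁻¹ + t⁻¹ * (1 - t) = 0 := by field_simp; ring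
    rw [h0, zero_smul, zero_add]
  have hinv1 : t⁻¹ ≤ 1 := by
    rw [inv_le_one_iff₀]; right; exact ht1
  refine Set.mem_iUnion.mpr ⟨k, ?_⟩
  rw [← hvcomb]
  exact hBconv k hxk hk (by linarith) (by positivity) (by ring)
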